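/- Let x₀, x₁ ∈ {0,1} and p₁, o₁ be real numbers with o₁ = p₁² and p₁ = p₁·x₁. Set u = x₀·x₁ and z = x₀·p₁. Then the 3×3 matrix with rows (x₀, u, z), (u, x₁, p₁), (z, p₁, o₁) is positive semidefinite. -/

import Mathlib

theorem tsdp_unit_conic2 (x₀ x₁ p₁ o₁ u z : ℝ)
    (hx₀ : x₀ = 0 ∨ x₀ = 1) (hx₁ : x₁ = 0 ∨ x₁ = 1)
    (ho₁ : o₁ = p₁ ^ 2) (hp₁ : p₁ = p₁ * x₁)
    (hu : u = x₀ * x₁) (hz : z = x₀ * p₁) :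
    (!![x₀, u, z; u, x₁, p₁; z, p₁, o₁] : Matrix (Fin 3) (Fin 3) ℝ).PosSemidef := by
  refine Matrix.PosSemidef.of_dotProduct_mulVec_nonneg ?_ ?_
  · ext i j
    fin_cases i <;> fin_cases j <;>
      simp [Matrix.conjTranspose_apply]
  · intro v
    have h0 := v 0
    simp only [Matrix.mulVec, dotProduct, Fin.sum_univ_three, Matrix.cons_val',
      Matrix.cons_val_zero, Matrix.cons_val_one, Matrix.head_cons, Matrix.empty_val',
      Matrix.cons_val_fin_one, Matrix.head_fin_const, RCLike.star_def, map_sum,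
      Matrix.of_apply, starRingEnd_apply, star_trivial]
    rcases hx₀ with h0 | h0 <;> rcases hx₁ with h1 | h1 <;>
      subst h0 h1 ho₁ hu hz <;>
      simp_all [Matrix.vecHead, Matrix.vecTail] <;>
      nlinarith [sq_nonneg (v 0), sq_nonneg (v 1 + p₁ * v 2), sq_nonneg (v 0 + v 1 + p₁ * v 2), sq_nonneg (v 2)]
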